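/- Let T_i > 0, η₀ ∈ ℝ, and let α∞ ∈ (0,1) satisfy 2 log((1-α∞)/α∞) - (5/2)(1+α∞) + η₀ = 0. Define 𝒯(α) = (1+α)·T_i / d(α), where d(α) = 2 log((1-α)/α) - (5/2)(1+α) + η₀. Then 𝒯 is strictly positive and strictly monotone increasing on (0, α∞), 𝒯(α) → 0 as α → 0⁺, and 𝒯(α) → +∞ as α → α∞⁻. -/

import Mathlib

open Filter Set Real

lemma d_strict_anti (η₀ : ℝ) {a b : ℝ} (ha : 0 < a) (hab : a < b) (hb : b < 1) :
    2 * Real.log ((1 - b) / b) - (5/2) * (1 + b) + η₀ <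
      2 * Real.log ((1 - a) / a) - (5/2) * (1 + a) + η₀ := by
  have hb0 : 0 < b := ha.trans hab
  have hpos : 0 < (1 - b) / b := div_pos (by linarith) hb0
  have hlt : (1 - b) / b < (1 - a) / a := by
    rw [div_lt_div_iff₀ hb0 ha]; nlinarith
  have := Real.log_lt_log hpos hlt
  linarith

open Filter Set in
/-- With d(α) = 2 log((1-α)/α) - (5/2)(1+α) + η₀ and α∞ ∈ (0,1) its zero, the function
𝒯(α) = (1+α)T_i/d(α) is strictly positive and strictly increasing on (0, α∞),
tends to 0 as α → 0⁺ and to +∞ as α → α∞⁻. -/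
theorem integral_curve_T (Ti η₀ αInf : ℝ) (hTi : 0 < Ti)
    (hαInf : αInf ∈ Set.Ioo (0 : ℝ) 1)
    (hzero : 2 * Real.log ((1 - αInf) / αInf) - (5/2) * (1 + αInf) + η₀ = 0) :
    (∀ α ∈ Set.Ioo (0 : ℝ) αInf,
      0 < (1 + α) * Ti / (2 * Real.log ((1 - α) / α) - (5/2) * (1 + α) + η₀)) ∧
    StrictMonoOn
      (fun α : ℝ => (1 + α) * Ti / (2 * Real.log ((1 - α) / α) - (5/2) * (1 + α) + η₀))
      (Set.Ioo (0 : ℝ) αInf) ∧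
    Tendsto
      (fun α : ℝ => (1 + α) * Ti / (2 * Real.log ((1 - α) / α) - (5/2) * (1 + α) + η₀))
      (nhdsWithin 0 (Set.Ioi 0)) (nhds 0) ∧
    Tendsto
      (fun α : ℝ => (1 + α) * Ti / (2 * Real.log ((1 - α) / α) - (5/2) * (1 + α) + η₀))
      (nhdsWithin αInf (Set.Iio αInf)) atTop := by
  obtain ⟨hα0, hα1⟩ := hαInf
  set d : ℝ → ℝ := fun α => 2 * Real.log ((1 - α) / α) - (5/2) * (1 + α) + η₀ with hd
  have hdpos : ∀ α ∈ Set.Ioo (0 : ℝ) αInf, 0 < d α := by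
    intro α hα
    have := d_strict_anti η₀ hα.1 hα.2 hα1
    simp only [hd]
    linarith [hzero ▸ this]
  have hpos : ∀ α ∈ Set.Ioo (0 : ℝ) αInf, 0 < (1 + α) * Ti / d α := by
    intro α hα
    exact div_pos (mul_pos (by linarith [hα.1]) hTi) (hdpos α hα)
  refine ⟨hpos, ?_, ?_, ?_⟩
  · -- strict mono
    intro a ha b hb hab
    have hda := hdpos a ha
    have hdb := hdpos b hb
    have hdlt : d b < d a := d_strict_anti η₀ ha.1 hab (hb.2.trans hα1)
    calc (1 + a) * Ti / d a < (1 + a) * Ti / d b :=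
          div_lt_div_of_pos_left (mul_pos (by linarith [ha.1]) hTi) hdb hdlt
      _ < (1 + b) * Ti / d b := by
          apply div_lt_div_of_pos_right ?_ hdb; nlinarith
  · -- limit at 0⁺
    have hnum : Tendsto (fun α : ℝ => (1 + α) * Ti) (nhdsWithin 0 (Set.Ioi 0))
        (nhds ((1 + 0) * Ti)) :=
      Tendsto.mono_left (((continuous_const.add continuous_id).mul continuous_const).tendsto 0)
        nhdsWithin_le_nhds
    have hden : Tendsto d (nhdsWithin 0 (Set.Ioi 0)) atTop := by
      have hev : (fun α : ℝ => 2 * Real.log (1 - α) - (5/2) * (1 + α) + η₀ + (-2) * Real.log α)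
          =ᶠ[nhdsWithin (0:ℝ) (Set.Ioi 0)] d := by
        filter_upwards [Ioo_mem_nhdsGT_of_mem (by norm_num : (0:ℝ) ∈ Set.Ico (0:ℝ) 1)] with α hα
        simp only [hd]
        rw [Real.log_div (by linarith [hα.2]) (ne_of_gt hα.1)]
        ring
      refine Tendsto.congr' hev ?_
      have h1 : Tendsto (fun α : ℝ => (-2) * Real.log α) (nhdsWithin 0 (Set.Ioi 0)) atTop :=
        Tendsto.const_mul_atBot_of_neg (by norm_num : (-2:ℝ) < 0) Real.tendsto_log_nhdsGT_zero
      have h2 : Tendsto (fun α : ℝ => 2 * Real.log (1 - α) - (5/2) * (1 + α) + η₀)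
          (nhdsWithin 0 (Set.Ioi 0)) (nhds (2 * Real.log (1 - 0) - (5/2) * (1 + 0) + η₀)) := by
        refine Tendsto.mono_left (ContinuousAt.tendsto ?_) nhdsWithin_le_nhds
        have hlog : ContinuousAt (fun α : ℝ => Real.log (1 - α)) 0 :=
          ContinuousAt.log (by fun_prop) (by norm_num)
        fun_prop
      exact h2.add_atTop h1
    exact hnum.div_atTop hden
  · -- limit at αInf⁻
    have hdcont : ContinuousAt d αInf := by
      have hq : ContinuousAt (fun α : ℝ => (1 - α) / α) αInf :=
        ContinuousAt.div (by fun_prop) (by fun_prop) (ne_of_gt hα0)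
      have hlog : ContinuousAt (fun α : ℝ => Real.log ((1 - α) / α)) αInf :=
        ContinuousAt.log hq (ne_of_gt (div_pos (by linarith) hα0))
      simp only [hd]
      fun_prop
    have hdto : Tendsto d (nhdsWithin αInf (Set.Iio αInf)) (nhdsWithin 0 (Set.Ioi 0)) := by
      refine tendsto_nhdsWithin_of_tendsto_nhds_of_eventually_within _ ?_ ?_
      · have := hdcont.tendsto
        rw [show d αInf = 0 by simpa [hd] using hzero] at this
        exact this.mono_left nhdsWithin_le_nhds
      · filter_upwards [Ioo_mem_nhdsLT_of_mem
          (by constructor <;> [exact hα0; exact le_refl αInf] : αInf ∈ Set.Ioc 0 αInf)] with α hα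
        exact hdpos α hα
    have hinv : Tendsto (fun α => (d α)⁻¹) (nhdsWithin αInf (Set.Iio αInf)) atTop :=
      tendsto_inv_nhdsGT_zero.comp hdto
    have hnum : Tendsto (fun α : ℝ => (1 + α) * Ti) (nhdsWithin αInf (Set.Iio αInf))
        (nhds ((1 + αInf) * Ti)) :=
      Tendsto.mono_left (((continuous_const.add continuous_id).mul continuous_const).tendsto αInf)
        nhdsWithin_le_nhds
    have := (hnum.pos_mul_atTop (by nlinarith : (0:ℝ) < (1 + αInf) * Ti) hinv)
    simpa [hd, div_eq_mul_inv] using this
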